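/- arXiv:2201.08036 — 6 statements merged into one kernel-verified Lean document; each statement's English description precedes it below -/
import Mathlib

section
/- In any lattice, an element is neutral if and only if it is both distributive and codistributive and cancellable. -/
theorem stmt_5 {L : Type*} [Lattice L] (x : L) :
    (∀ y z : L, (x ⊔ y) ⊓ (y ⊔ z) ⊓ (z ⊔ x) = (x ⊓ y) ⊔ (y ⊓ z) ⊔ (z ⊓ x)) ↔
      ((∀ y z : L, x ⊔ (y ⊓ z) = (x ⊔ y) ⊓ (x ⊔ z)) ∧
       (∀ y z : L, x ⊓ (y ⊔ z) = (x ⊓ y) ⊔ (x ⊓ z)) ∧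
       (∀ y z : L, x ⊔ y = x ⊔ z → x ⊓ y = x ⊓ z → y = z)) := by
  constructor
  · intro h
    -- key : y ⊓ (x ⊔ z) ≤ x ⊔ (y ⊓ z)
    have key : ∀ y z : L, y ⊓ (x ⊔ z) ≤ x ⊔ (y ⊓ z) := by
      intro y z
      have h1 : y ⊓ (x ⊔ z) ≤ (x ⊔ y) ⊓ (y ⊔ z) ⊓ (z ⊔ x) :=
        le_inf (le_inf (le_sup_of_le_right inf_le_left) (le_sup_of_le_left inf_le_left))
          (inf_le_right.trans (le_of_eq (sup_comm x z)))
      have h2 : (x ⊓ y) ⊔ (y ⊓ z) ⊔ (z ⊓ x) ≤ x ⊔ (y ⊓ z) :=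
        sup_le (sup_le (le_sup_of_le_left inf_le_left) le_sup_right)
          (le_sup_of_le_left inf_le_right)
      exact (h y z ▸ h1).trans h2
    -- dual key : x ⊓ (y ⊔ z) ≤ y ⊔ (x ⊓ z)
    have key' : ∀ y z : L, x ⊓ (y ⊔ z) ≤ y ⊔ (x ⊓ z) := by
      intro y z
      have h1 : x ⊓ (y ⊔ z) ≤ (x ⊔ y) ⊓ (y ⊔ z) ⊓ (z ⊔ x) :=
        le_inf (le_inf (le_sup_of_le_left inf_le_left) inf_le_right)
          (le_sup_of_le_right inf_le_left)
      have h2 : (x ⊓ y) ⊔ (y ⊓ z) ⊔ (z ⊓ x) ≤ y ⊔ (x ⊓ z) :=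
        sup_le (sup_le (le_sup_of_le_left inf_le_right) (le_sup_of_le_left inf_le_left))
          (le_sup_of_le_right (le_of_eq (inf_comm z x)))
      exact (h y z ▸ h1).trans h2
    -- eq1 : (x ⊔ y) ⊓ (x ⊔ z) ≤ x ⊔ (y ⊓ (x ⊔ z))
    have eq1 : ∀ y z : L, (x ⊔ y) ⊓ (x ⊔ z) ≤ x ⊔ (y ⊓ (x ⊔ z)) := by
      intro y z
      have h1 : (x ⊔ y) ⊓ (x ⊔ z) ≤ (x ⊔ y) ⊓ (y ⊔ (x ⊔ z)) ⊓ ((x ⊔ z) ⊔ x) :=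
        le_inf (le_inf inf_le_left (inf_le_left.trans
            (sup_le (le_sup_of_le_right le_sup_left) le_sup_left)))
          (inf_le_right.trans le_sup_left)
      have h2 : (x ⊓ y) ⊔ (y ⊓ (x ⊔ z)) ⊔ ((x ⊔ z) ⊓ x) ≤ x ⊔ (y ⊓ (x ⊔ z)) :=
        sup_le (sup_le (le_sup_of_le_left inf_le_left) le_sup_right)
          (le_sup_of_le_left inf_le_right)
      exact (h y (x ⊔ z) ▸ h1).trans h2
    -- eq2 : x ⊓ (y ⊔ (x ⊓ z)) ≤ (x ⊓ y) ⊔ (x ⊓ z)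
    have eq2 : ∀ y z : L, x ⊓ (y ⊔ (x ⊓ z)) ≤ (x ⊓ y) ⊔ (x ⊓ z) := by
      intro y z
      have h1 : x ⊓ (y ⊔ (x ⊓ z)) ≤ (x ⊔ y) ⊓ (y ⊔ (x ⊓ z)) ⊓ ((x ⊓ z) ⊔ x) :=
        le_inf (le_inf (inf_le_left.trans le_sup_left) inf_le_right)
          (inf_le_left.trans le_sup_right)
      have h2 : (x ⊓ y) ⊔ (y ⊓ (x ⊓ z)) ⊔ ((x ⊓ z) ⊓ x) ≤ (x ⊓ y) ⊔ (x ⊓ z) :=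
        sup_le (sup_le le_sup_left (le_sup_of_le_right inf_le_right))
          (le_sup_of_le_right inf_le_left)
      exact (h y (x ⊓ z) ▸ h1).trans h2
    refine ⟨fun y z => ?_, fun y z => ?_, fun y z h1 h2 => ?_⟩
    · refine le_antisymm (le_inf (sup_le le_sup_left (le_sup_of_le_right inf_le_left))
        (sup_le le_sup_left (le_sup_of_le_right inf_le_right))) ?_
      exact (eq1 y z).trans (sup_le le_sup_left (key y z))
    · refine le_antisymm ?_ (sup_le (le_inf inf_le_left (inf_le_right.trans le_sup_left))
        (le_inf inf_le_left (inf_le_right.trans le_sup_right)))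
      exact (le_inf inf_le_left (key' y z)).trans (eq2 y z)
    · have hy : y ≤ (x ⊔ y) ⊓ (y ⊔ z) ⊓ (z ⊔ x) :=
        le_inf (le_inf le_sup_right le_sup_left)
          (by rw [sup_comm, ← h1]; exact le_sup_right)
      have hz : z ≤ (x ⊔ z) ⊓ (z ⊔ y) ⊓ (y ⊔ x) :=
        le_inf (le_inf le_sup_right le_sup_left)
          (by rw [sup_comm, h1]; exact le_sup_right)
      have hy2 : y ≤ z := by
        have hM := h y z ▸ hy
        refine hM.trans (sup_le (sup_le ?_ inf_le_right) inf_le_left)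
        rw [h2]; exact inf_le_right
      have hz2 : z ≤ y := by
        have hM := h z y ▸ hz
        refine hM.trans (sup_le (sup_le ?_ inf_le_right) inf_le_left)
        rw [← h2]; exact inf_le_right
      exact le_antisymm hy2 hz2
  · rintro ⟨hd, hc, hcan⟩ y z
    apply hcan
    · -- x ⊔ L1 = x ⊔ L2
      apply le_antisymm
      · -- uses distributivity
        rw [inf_assoc, hd, hd]
        have le1 : (x ⊔ (x ⊔ y)) ⊓ ((x ⊔ (y ⊔ z)) ⊓ (x ⊔ (z ⊔ x))) ≤ (x ⊔ y) ⊓ (x ⊔ z) :=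
          le_inf (inf_le_left.trans (sup_le le_sup_left le_rfl))
            (inf_le_right.trans (inf_le_right.trans
              (sup_le le_sup_left (sup_le le_sup_right le_sup_left))))
        refine le1.trans ((hd y z).ge.trans ?_)
        exact sup_le le_sup_left (le_sup_of_le_right (le_sup_of_le_left le_sup_right))
      · refine sup_le le_sup_left ?_
        refine sup_le (sup_le (le_sup_of_le_left inf_le_left) (le_sup_of_le_right ?_))
          (le_sup_of_le_left inf_le_right)
        exact le_inf (le_inf (le_sup_of_le_right inf_le_left) (le_sup_of_le_left inf_le_left))
          (le_sup_of_le_left inf_le_right)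
    · -- x ⊓ L1 = x ⊓ L2
      apply le_antisymm
      · -- uses codistributivity
        refine le_inf inf_le_left ?_
        have le1 : x ⊓ ((x ⊔ y) ⊓ (y ⊔ z) ⊓ (z ⊔ x)) ≤ x ⊓ (y ⊔ z) :=
          le_inf inf_le_left (inf_le_right.trans (inf_le_left.trans inf_le_right))
        refine le1.trans ((hc y z).le.trans ?_)
        exact sup_le (le_sup_of_le_left le_sup_left)
          (le_sup_of_le_right (le_inf inf_le_right inf_le_left))
      · refine le_inf inf_le_left (le_inf (le_inf (inf_le_left.trans le_sup_left) ?_)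
          (inf_le_left.trans le_sup_right))
        exact inf_le_right.trans (sup_le (sup_le (inf_le_right.trans le_sup_left)
          (inf_le_left.trans le_sup_left)) (inf_le_left.trans le_sup_right))
end

section
/- For words u, v over an alphabet X, the identity u ≈ v holds in every left regular band monoid (i.e., every monoid satisfying xy = xyx for all elements x, y) under every interpretation of the variables if and only if ini(u) = ini(v). -/
/-- `ini w` retains only the first occurrence of each letter of the word `w`. -/
def ini {X : Type*} [DecidableEq X] : List X → List X
  | [] => []
  | a :: l => a :: (ini l).filter (fun b => decide (b ≠ a))

section Aux

variable {M : Type} [Monoid M]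

lemma lrb_idem (hM : ∀ x y : M, x * y = x * y * x) (x : M) : x * x = x := by
  have h := hM x 1
  simp at h
  exact h.symm

lemma lrb_absorb (hM : ∀ x y : M, x * y = x * y * x) (φ : ℕ → M) (a : ℕ) :
    ∀ (l : List ℕ) (m : M), m * φ a = m →
      m * (l.map φ).prod = m * ((l.filter (fun b => decide (b ≠ a))).map φ).prod := by
  intro l
  induction l with
  | nil => intro m _; rfl
  | cons b l ih =>
    intro m hm
    by_cases hb : b = a
    · subst hb
      rw [List.filter_cons_of_neg (by simp)]
      simp only [List.map_cons, List.prod_cons]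
      rw [← mul_assoc, hm]
      exact ih m hm
    · rw [List.filter_cons_of_pos (by simp [hb])]
      simp only [List.map_cons, List.prod_cons]
      rw [← mul_assoc, ← mul_assoc]
      apply ih
      have h1 : m * φ b = m * (φ a * φ b) := by rw [← mul_assoc, hm]
      rw [h1, mul_assoc m (φ a * φ b) (φ a), ← hM (φ a) (φ b)]

lemma ini_filter (p : ℕ → Bool) : ∀ l : List ℕ, ini (l.filter p) = (ini l).filter p := by
  intro l
  induction l with
  | nil => rfl
  | cons a l ih =>
    by_cases hp : p a = true
    · rw [List.filter_cons_of_pos hp]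
      show ini (a :: l.filter p) = (a :: (ini l).filter _).filter p
      simp only [ini, ih]
      rw [List.filter_cons_of_pos hp, List.filter_comm]
    · rw [List.filter_cons_of_neg (by simp [hp])]
      show ini (l.filter p) = (a :: (ini l).filter _).filter p
      rw [ih, List.filter_cons_of_neg (by simp [hp]), List.filter_comm]
      symm
      apply List.filter_eq_self.mpr
      intro x hx
      have hxp : p x = true := List.of_mem_filter hx
      have : x ≠ a := by rintro rfl; rw [hxp] at hp; exact hp rfl
      simp [this]

lemma lrb_prod_ini_aux (hM : ∀ x y : M, x * y = x * y * x) (φ : ℕ → M) :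
    ∀ n (w : List ℕ), w.length ≤ n → (w.map φ).prod = ((ini w).map φ).prod := by
  intro n
  induction n with
  | zero =>
    intro w hw
    rw [List.length_eq_zero_iff.mp (Nat.le_zero.mp hw)]
    rfl
  | succ n ih =>
    intro w hw
    match w with
    | [] => rfl
    | a :: l =>
      simp only [ini, List.map_cons, List.prod_cons]
      have h1 := lrb_absorb hM φ a l (φ a) (lrb_idem hM (φ a))
      rw [h1, ih (l.filter (fun b => decide (b ≠ a)))
        (le_trans (List.length_filter_le _ _) (Nat.le_of_succ_le_succ hw)),
        ini_filter]

lemma lrb_prod_ini (hM : ∀ x y : M, x * y = x * y * x) (φ : ℕ → M) (w : List ℕ) :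
    (w.map φ).prod = ((ini w).map φ).prod :=
  lrb_prod_ini_aux hM φ w.length w le_rfl

end Aux

/-- The free left regular band monoid on ℕ. -/
abbrev FL : Type := List ℕ

namespace FL

instance instMonoid : Monoid FL where
  mul l m := l ++ m.filter (fun x => decide (x ∉ l))
  one := ([] : List ℕ)
  one_mul m := by
    show ([] : List ℕ) ++ m.filter (fun x => decide (x ∉ ([] : List ℕ))) = m
    simp
  mul_one l := by
    show l ++ List.filter _ [] = l
    simp
  mul_assoc l m n := by
    show (l ++ m.filter (fun x => decide (x ∉ l))) ++
        n.filter (fun x => decide (x ∉ l ++ m.filter (fun x => decide (x ∉ l)))) =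
      l ++ (m ++ n.filter (fun x => decide (x ∉ m))).filter (fun x => decide (x ∉ l))
    rw [List.filter_append, List.append_assoc, List.filter_filter]
    congr 1
    congr 1
    apply List.filter_congr
    intro x _
    rw [← Bool.decide_and, decide_eq_decide]
    simp only [List.mem_append, List.mem_filter, decide_eq_true_eq]
    tauto

lemma lrb : ∀ x y : FL, x * y = x * y * x := by
  intro x y
  show (x * y : FL) = (x * y) ++ x.filter (fun a => decide (a ∉ (x * y : FL)))
  have h : x.filter (fun a => decide (a ∉ (x * y : FL))) = [] := by
    apply List.filter_eq_nil_iff.mpr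
    intro a ha
    simp only [decide_eq_true_eq, not_not]
    show a ∈ x ++ _
    exact List.mem_append_left _ ha
  rw [h, List.append_nil]

lemma single_prod : ∀ w : List ℕ,
    ((w.map (fun n => ([n] : FL))).prod : FL) = (ini w : List ℕ) := by
  intro w
  induction w with
  | nil => rfl
  | cons a l ih =>
    simp only [List.map_cons, List.prod_cons, ih]
    show ([a] : List ℕ) ++ (ini l).filter (fun x => decide (x ∉ ([a] : List ℕ)))
      = a :: (ini l).filter (fun b => decide (b ≠ a))
    rw [List.singleton_append]
    congr 1
    apply List.filter_congr
    intro x _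
    simp

end FL

theorem stmt_8 (u v : List ℕ) :
    (∀ (M : Type) [Monoid M], (∀ x y : M, x * y = x * y * x) →
      ∀ φ : ℕ → M, (u.map φ).prod = (v.map φ).prod) ↔ ini u = ini v := by
  constructor
  · intro h
    have h2 := h FL FL.lrb (fun n => ([n] : FL))
    rwa [FL.single_prod, FL.single_prod] at h2
  · intro h M _ hM φ
    rw [lrb_prod_ini hM φ u, lrb_prod_ini hM φ v, h]
end

section
/- A monoid M satisfying xy = xyx for all x, y satisfies φ(w) = φ(ini(w)) for every homomorphism φ from the free monoid to M and every word w. -/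
private lemma absorb {X M : Type*} [DecidableEq X] [Monoid M]
    (h : ∀ x y : M, x * y = x * y * x) (φ : X → M) (a : X) :
    ∀ (u : List X) (m : M), m * φ a = m →
      m * ((u.filter (fun b => decide (b ≠ a))).map φ).prod = m * (u.map φ).prod := by
  intro u
  induction u with
  | nil => intro m _; simp
  | cons b t ih =>
    intro m hm
    by_cases hb : b = a
    · subst hb
      have hf : (b :: t).filter (fun c => decide (c ≠ b)) = t.filter (fun c => decide (c ≠ b)) := by
        simp
      rw [hf, ih m hm, List.map_cons, List.prod_cons, ← mul_assoc, hm]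
    · have hba : (decide ¬b = a) = true := by simp [hb]
      simp only [List.filter_cons, ne_eq, hba, if_true, List.map_cons, List.prod_cons,
        ← mul_assoc]
      have hm' : m * φ b * φ a = m * φ b := by
        have h1 : m * φ b = m * φ b * m := h m (φ b)
        rw [h1, mul_assoc, hm]
      rw [ih (m * φ b) hm']

theorem stmt_9 {X M : Type*} [DecidableEq X] [Monoid M]
    (h : ∀ x y : M, x * y = x * y * x) (φ : X → M) (w : List X) :
    (w.map φ).prod = ((ini w).map φ).prod := by
  induction w with
  | nil => rfl
  | cons a l ih =>
    have hidem : φ a * φ a = φ a := by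
      have := h (φ a) 1
      simpa using this.symm
    simp only [ini, List.map_cons, List.prod_cons, ih]
    rw [absorb h φ a (ini l) (φ a) hidem]
end

section
/- Let u and v be words over {x, y} with occ_x(u) = occ_x(v) = occ_y(u) = occ_y(v) = n for some n ≥ 2, and let u', v' be obtained from u, v by swapping x and y. If ξ is an endomorphism of the free monoid over a countable alphabet with ξ(x), ξ(y) nonempty and a, b are words such that a·ξ(s)·b ∈ {u·x, u'·x} for s ∈ {u·x, u'·x, v·x, v'·x}, then a = b is the empty word, ξ(x) = x, and ξ(y) = y. -/
/-- The substitution swapping the letters `x = 0` and `y = 1`. -/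
def swapxy : ℕ → ℕ := fun c => if c = 0 then 1 else if c = 1 then 0 else c

lemma len01 (u : List ℕ) (h : ∀ c ∈ u, c = 0 ∨ c = 1) :
    u.length = u.count 0 + u.count 1 := by
  induction u with
  | nil => simp
  | cons c t ih =>
    have hc := h c (by simp)
    have ht := ih (fun d hd => h d (by simp [hd]))
    rcases hc with rfl | rfl <;> simp [List.count_cons, ht] <;> omega

lemma swap_count (u : List ℕ) (h : ∀ c ∈ u, c = 0 ∨ c = 1) :
    (u.map swapxy).count 0 = u.count 1 ∧ (u.map swapxy).count 1 = u.count 0 ∧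
    (∀ c ∈ u.map swapxy, c = 0 ∨ c = 1) := by
  induction u with
  | nil => simp
  | cons c t ih =>
    have hc := h c (by simp)
    obtain ⟨h1, h2, h3⟩ := ih (fun d hd => h d (by simp [hd]))
    have hmem : ∀ d ∈ (c :: t).map swapxy, d = 0 ∨ d = 1 := by
      intro d hd
      simp only [List.map_cons, List.mem_cons] at hd
      rcases hd with rfl | hd
      · rcases hc with rfl | rfl <;> simp [swapxy]
      · exact h3 d hd
    refine ⟨?_, ?_, hmem⟩ <;>
      rcases hc with rfl | rfl <;>
      simp [swapxy, List.count_cons, h1, h2]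

lemma join_measure (μ : List ℕ → ℕ) (hμ : ∀ x y : List ℕ, μ (x ++ y) = μ x + μ y)
    (ξ : ℕ → List ℕ) (s : List ℕ) (h : ∀ c ∈ s, c = 0 ∨ c = 1) :
    μ (s.map ξ).flatten = s.count 0 * μ (ξ 0) + s.count 1 * μ (ξ 1) := by
  have h0 : μ [] = 0 := by have := hμ [] []; simpa using this
  revert h
  induction s with
  | nil => intro _; simp [h0]
  | cons c t ih =>
    intro h
    have ht := ih (fun d hd => h d (List.mem_cons_of_mem _ hd))
    have hc := h c (by simp)
    simp only [List.map_cons, List.flatten_cons, hμ, ht, List.count_cons]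
    rcases hc with rfl | rfl <;> simp <;> ring

lemma mem01_append0 (u : List ℕ) (h : ∀ c ∈ u, c = 0 ∨ c = 1) :
    ∀ c ∈ u ++ [0], c = 0 ∨ c = 1 := by
  intro c hc
  rcases List.mem_append.1 hc with h' | h'
  · exact h c h'
  · left; simpa using h'

lemma key_arith (n A B la lb : ℕ) (hn : 2 ≤ n) (hA : 1 ≤ A) (hB : 1 ≤ B)
    (hE : la + ((n + 1) * A + n * B) + lb = 2 * n + 1) :
    A = 1 ∧ B = 1 ∧ la = 0 ∧ lb = 0 := by
  rcases Nat.lt_or_ge A 2 with h | h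
  · have hA1 : A = 1 := by omega
    subst hA1
    rcases Nat.lt_or_ge B 2 with h' | h' 
    · have hB1 : B = 1 := by omega
      subst hB1; omega
    · have := Nat.mul_le_mul_left n h'
      omega
  · have := Nat.mul_le_mul_left (n + 1) h
    have := Nat.mul_le_mul_left n hB
    omega

lemma final_arith (n p q : ℕ) (hn : 2 ≤ n)
    (e0 : (n + 1) * (if p = 0 then 1 else 0) + n * (if q = 0 then 1 else 0) = n + 1)
    (e1 : (n + 1) * (if p = 1 then 1 else 0) + n * (if q = 1 then 1 else 0) = n) :
    p = 0 ∧ q = 1 := by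
  split_ifs at e0 e1 <;> omega

theorem stmt_15 (n : ℕ) (hn : 2 ≤ n) (u v : List ℕ)
    (hu : ∀ c ∈ u, c = 0 ∨ c = 1) (hv : ∀ c ∈ v, c = 0 ∨ c = 1)
    (hu0 : u.count 0 = n) (hu1 : u.count 1 = n)
    (hv0 : v.count 0 = n) (hv1 : v.count 1 = n)
    (ξ : ℕ → List ℕ) (hξx : ξ 0 ≠ []) (hξy : ξ 1 ≠ [])
    (a b s : List ℕ)
    (hs : s ∈ [u ++ [0], u.map swapxy ++ [0], v ++ [0], v.map swapxy ++ [0]])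
    (hp : a ++ (s.map ξ).flatten ++ b ∈ [u ++ [0], u.map swapxy ++ [0]]) :
    a = [] ∧ b = [] ∧ ξ 0 = [0] ∧ ξ 1 = [1] := by
  obtain ⟨hsu0, hsu1, hsumem⟩ := swap_count u hu
  obtain ⟨hsv0, hsv1, hsvmem⟩ := swap_count v hv
  simp only [List.mem_cons, List.not_mem_nil, or_false] at hs hp
  -- properties of s
  have hs01 : ∀ c ∈ s, c = 0 ∨ c = 1 := by
    rcases hs with rfl | rfl | rfl | rfl
    · exact mem01_append0 u hu
    · exact mem01_append0 _ hsumem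
    · exact mem01_append0 v hv
    · exact mem01_append0 _ hsvmem
  have hs0 : s.count 0 = n + 1 := by
    rcases hs with rfl | rfl | rfl | rfl <;>
      simp [List.count_append, hu0, hu1, hv0, hv1, hsu0, hsv0]
  have hs1 : s.count 1 = n := by
    rcases hs with rfl | rfl | rfl | rfl <;>
      simp [List.count_append, hu0, hu1, hv0, hv1, hsu1, hsv1]
  -- properties of the target word w
  set w := a ++ (s.map ξ).flatten ++ b with hw
  have hw0 : w.count 0 = n + 1 := by
    rcases hp with h | h <;> rw [h] <;>
      simp [List.count_append, hu0, hu1, hsu0]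
  have hw1 : w.count 1 = n := by
    rcases hp with h | h <;> rw [h] <;>
      simp [List.count_append, hu0, hu1, hsu1]
  have hwlen : w.length = 2 * n + 1 := by
    rcases hp with h | h <;> rw [h]
    · rw [len01 _ (mem01_append0 u hu)]
      simp [List.count_append, hu0, hu1]; omega
    · rw [len01 _ (mem01_append0 _ hsumem)]
      simp [List.count_append, hsu0, hsu1, hu0, hu1]; omega
  -- length computation
  have hjlen : (s.map ξ).flatten.length
      = (n + 1) * (ξ 0).length + n * (ξ 1).length := by
    rw [join_measure List.length (by simp) ξ s hs01, hs0, hs1]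
  have hL0 : 1 ≤ (ξ 0).length := List.length_pos_iff.2 hξx
  have hL1 : 1 ≤ (ξ 1).length := List.length_pos_iff.2 hξy
  have hlensum : a.length + ((n + 1) * (ξ 0).length + n * (ξ 1).length) + b.length
      = 2 * n + 1 := by
    rw [← hjlen, ← List.length_append, ← List.length_append, ← hw, hwlen]
  obtain ⟨hA1, hB1, ha0, hb0⟩ := key_arith n _ _ _ _ hn hL0 hL1 hlensum
  have ha : a = [] := List.length_eq_zero_iff.1 ha0
  have hb : b = [] := List.length_eq_zero_iff.1 hb0
  obtain ⟨p, hpeq⟩ := List.length_eq_one_iff.1 hA1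
  obtain ⟨q, hqeq⟩ := List.length_eq_one_iff.1 hB1
  -- count computations
  have hc0 : (s.map ξ).flatten.count 0 = (n + 1) * (ξ 0).count 0 + n * (ξ 1).count 0 := by
    rw [join_measure (fun l => l.count 0) (by simp [List.count_append]) ξ s hs01, hs0, hs1]
  have hc1 : (s.map ξ).flatten.count 1 = (n + 1) * (ξ 0).count 1 + n * (ξ 1).count 1 := by
    rw [join_measure (fun l => l.count 1) (by simp [List.count_append]) ξ s hs01, hs0, hs1]
  have hwj : w = (s.map ξ).flatten := by rw [hw, ha, hb]; simp
  rw [hwj] at hw0 hw1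
  rw [hc0, hpeq, hqeq] at hw0
  rw [hc1, hpeq, hqeq] at hw1
  have csing : ∀ r z : ℕ, ([r] : List ℕ).count z = if r = z then 1 else 0 := by
    intro r z
    rcases eq_or_ne r z with rfl | h
    · simp
    · simp [List.count_cons, h, Ne.symm h]
  have cp0 := csing p 0
  have cp1 := csing p 1
  have cq0 := csing q 0
  have cq1 := csing q 1
  rw [cp0, cq0] at hw0
  rw [cp1, cq1] at hw1
  have hpq : p = 0 ∧ q = 1 := final_arith n p q hn hw0 hw1
  refine ⟨ha, hb, ?_, ?_⟩
  · rw [hpeq, hpq.1]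
  · rw [hqeq, hpq.2]
end

section
/- Let u ≈ v be a nontrivial identity in two variables x, y (u ≠ v as words). Then there exist words ū, v̄ in {x, y} with con(ū) = con(v̄) = {x, y} and occ_x(ū) = occ_x(v̄) = occ_y(ū) = occ_y(v̄) = n for some n ≥ 2, such that ū ≈ v̄ is nontrivial and is a consequence of u ≈ v together with the identities x^{occ_x(u)+1} ≈ x^{occ_x(v)+1} and x^{occ_y(u)+1} ≈ x^{occ_y(v)+1}. -/
theorem aux_count_eq {α : Type*} (c d : α) (hcd : d ≠ c) :
    ∀ (a b : ℕ) (r s : List α),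
      List.replicate a c ++ d :: r = List.replicate b c ++ d :: s → a = b := by
  intro a
  induction a with
  | zero =>
    intro b r s h
    cases b with
    | zero => rfl
    | succ b =>
      simp [List.replicate_succ] at h
      exact absurd h.1 hcd
  | succ a ih =>
    intro b r s h
    cases b with
    | zero =>
      simp [List.replicate_succ] at h
      exact absurd h.1.symm hcd
    | succ b =>
      simp only [List.replicate_succ, List.cons_append, List.cons.injEq] at h
      exact congrArg Nat.succ (ih b r s h.2)

theorem stmt_16 (u v : List (Fin 2)) (huv : u ≠ v) :
    ∃ (ub vb : List (Fin 2)) (n : ℕ), 2 ≤ n ∧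
      ub.count 0 = n ∧ ub.count 1 = n ∧ vb.count 0 = n ∧ vb.count 1 = n ∧
      ub ≠ vb ∧
      ∀ (M : Type) [Monoid M],
        (∀ φ : Fin 2 → M, (u.map φ).prod = (v.map φ).prod) →
        (∀ a : M, a ^ (u.count 0 + 1) = a ^ (v.count 0 + 1)) →
        (∀ a : M, a ^ (u.count 1 + 1) = a ^ (v.count 1 + 1)) →
        ∀ φ : Fin 2 → M, (ub.map φ).prod = (vb.map φ).prod := by
  by_cases h0 : u.count 0 = v.count 0
  · by_cases h1 : u.count 1 = v.count 1
    · -- counts agree: pad both sides identically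
      set n : ℕ := max (u.count 0) (u.count 1) + 2 with hn
      set k : ℕ := n - 1 - u.count 0 with hk
      set l : ℕ := n - 1 - u.count 1 with hl
      refine ⟨0 :: 1 :: (u ++ List.replicate k 0 ++ List.replicate l 1),
              0 :: 1 :: (v ++ List.replicate k 0 ++ List.replicate l 1), n,
              by omega, ?_, ?_, ?_, ?_, ?_, ?_⟩
      · simp [List.count_cons, List.count_append, List.count_replicate]; omega
      · simp [List.count_cons, List.count_append, List.count_replicate]; omega
      · simp [List.count_cons, List.count_append, List.count_replicate, ← h0]; omega
      · simp [List.count_cons, List.count_append, List.count_replicate, ← h1]; omega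
      · intro h
        simp only [List.cons.injEq, true_and, List.append_assoc] at h
        exact huv (List.append_cancel_right h)
      · intro M _ hid _ _ φ
        simp only [List.map_cons, List.map_append, List.prod_cons, List.prod_append,
          hid φ]
    · -- counts of 1 differ: use the third identity
      set p : ℕ := u.count 1 with hp
      set q : ℕ := v.count 1 with hq
      set n : ℕ := p + q + 2 with hn
      refine ⟨List.replicate (p + 1) 1 ++ List.replicate n 0 ++ List.replicate (q + 1) 1,
              List.replicate (q + 1) 1 ++ List.replicate n 0 ++ List.replicate (p + 1) 1, n,
              by omega, ?_, ?_, ?_, ?_, ?_, ?_⟩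
      · simp [List.count_append, List.count_replicate]
      · simp [List.count_append, List.count_replicate]; omega
      · simp [List.count_append, List.count_replicate]
      · simp [List.count_append, List.count_replicate]; omega
      · intro h
        have hrep : List.replicate n (0 : Fin 2) = 0 :: List.replicate (n - 1) 0 := by
          rw [← List.replicate_succ]; congr 1
        rw [List.append_assoc, List.append_assoc, hrep] at h
        simp only [List.cons_append] at h
        have := aux_count_eq (1 : Fin 2) (0 : Fin 2) (by decide) (p + 1) (q + 1) _ _ h
        omega
      · intro M _ _ _ h3 φ
        simp only [List.map_append, List.prod_append, List.map_replicate,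
          List.prod_replicate]
        rw [h3 (φ 1)]
  · -- counts of 0 differ: use the second identity
    set p : ℕ := u.count 0 with hp
    set q : ℕ := v.count 0 with hq
    set n : ℕ := p + q + 2 with hn
    refine ⟨List.replicate (p + 1) 0 ++ List.replicate n 1 ++ List.replicate (q + 1) 0,
            List.replicate (q + 1) 0 ++ List.replicate n 1 ++ List.replicate (p + 1) 0, n,
            by omega, ?_, ?_, ?_, ?_, ?_, ?_⟩
    · simp [List.count_append, List.count_replicate]; omega
    · simp [List.count_append, List.count_replicate]
    · simp [List.count_append, List.count_replicate]; omega
    · simp [List.count_append, List.count_replicate]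
    · intro h
      have hrep : List.replicate n (1 : Fin 2) = 1 :: List.replicate (n - 1) 1 := by
        rw [← List.replicate_succ]; congr 1
      rw [List.append_assoc, List.append_assoc, hrep] at h
      simp only [List.cons_append] at h
      have := aux_count_eq (0 : Fin 2) (1 : Fin 2) (by decide) (p + 1) (q + 1) _ _ h
      omega
    · intro M _ _ h2 _ φ
      simp only [List.map_append, List.prod_append, List.map_replicate,
        List.prod_replicate]
      rw [h2 (φ 0)]
end

section
/- Let k ≥ 2 and let u be a word over {x, y} with occ_x(u) = occ_y(u) = k such that x^k is not a subword of u. Consider words over the alphabet {x, y, t}. If ξ is an endomorphism of the free monoid with ξ(x), ξ(t) nonempty and ξ(y) the empty word, then a·ξ(x t u)·b ≠ x t u and a·ξ(x t u)·b ≠ t x u for all words a, b. -/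
private lemma join_cnt (ξ : ℕ → List ℕ) (hy : ξ 1 = []) :
    ∀ u : List ℕ, (∀ c ∈ u, c = 0 ∨ c = 1) →
      ∀ c, ((u.map ξ).flatten).count c = u.count 0 * ((ξ 0).count c) := by
  intro u
  induction u with
  | nil => simp
  | cons h t ih =>
    intro hu c
    rcases hu h (by simp) with rfl | rfl <;>
      simp [List.count_cons, ih (fun c hc => hu c (by simp [hc])) c, hy,
        Nat.succ_mul, Nat.add_comm]

private lemma join_len (ξ : ℕ → List ℕ) (hy : ξ 1 = []) :
    ∀ u : List ℕ, (∀ c ∈ u, c = 0 ∨ c = 1) →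
      ((u.map ξ).flatten).length = u.count 0 * (ξ 0).length := by
  intro u
  induction u with
  | nil => simp
  | cons h t ih =>
    intro hu
    rcases hu h (by simp) with rfl | rfl <;>
      simp [List.count_cons, ih (fun c hc => hu c (by simp [hc])), hy,
        Nat.succ_mul, Nat.add_comm]

private lemma join_rep (ξ : ℕ → List ℕ) (hy : ξ 1 = []) (hx : ξ 0 = [0]) :
    ∀ u : List ℕ, (∀ c ∈ u, c = 0 ∨ c = 1) →
      (u.map ξ).flatten = List.replicate (u.count 0) 0 := by
  intro u
  induction u with
  | nil => simp
  | cons h t ih =>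
    intro hu
    rcases hu h (by simp) with rfl | rfl <;>
      simp [List.count_cons, ih (fun c hc => hu c (by simp [hc])), hy, hx,
        List.replicate_succ]

private lemma ulen (u : List ℕ) (hu : ∀ c ∈ u, c = 0 ∨ c = 1) :
    u.length = u.count 0 + u.count 1 := by
  induction u with
  | nil => simp
  | cons h t ih =>
    rcases hu h (by simp) with rfl | rfl <;>
      simp [List.count_cons, ih (fun c hc => hu c (by simp [hc]))] <;> omega

private lemma key (k : ℕ) (hk : 2 ≤ k) (u : List ℕ)
    (hu : ∀ c ∈ u, c = 0 ∨ c = 1)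
    (h0 : u.count 0 = k) (h1 : u.count 1 = k)
    (hnf : ∀ a b : List ℕ, u ≠ a ++ List.replicate k 0 ++ b)
    (ξ : ℕ → List ℕ) (hξx : ξ 0 ≠ []) (hξt : ξ 2 ≠ []) (hξy : ξ 1 = [])
    (a b : List ℕ) (p : List ℕ) (hpl : p.length = 2)
    (hp0 : p.count 0 = 1) (hpc : ∀ c, c ≠ 0 → c ≠ 2 → p.count c = 0) :
    a ++ ((([0, 2] ++ u)).map ξ).flatten ++ b ≠ p ++ u := by
  intro h
  have himg : ((([0, 2] ++ u)).map ξ).flatten = ξ 0 ++ ξ 2 ++ (u.map ξ).flatten := by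
    simp
  rw [himg] at h
  have hulen : u.length = 2 * k := by have := ulen u hu; omega
  have hjl := join_len ξ hξy u hu
  have hlen := congrArg List.length h
  simp only [List.length_append, hjl, h0, hpl, hulen] at hlen
  have hp0ge : 1 ≤ (ξ 0).length := List.length_pos_iff.2 hξx
  have hqge : 1 ≤ (ξ 2).length := List.length_pos_iff.2 hξt
  -- length of ξ 0 is 1
  have hx1 : (ξ 0).length = 1 := by
    by_contra hne
    have h2 : 2 ≤ (ξ 0).length := by omega
    have := Nat.mul_le_mul_left k h2
    omega
  rw [hx1, Nat.mul_one] at hlen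
  obtain ⟨c, hc⟩ := List.length_eq_one_iff.1 hx1
  -- c = 0
  have hcnt := congrArg (List.count c) h
  simp only [List.count_append, join_cnt ξ hξy u hu c, h0, hc,
    List.count_singleton, beq_self_eq_true, if_true, Nat.mul_one] at hcnt
  have hc0 : c = 0 := by
    by_contra hne
    rcases eq_or_ne c 1 with rfl | hne1
    · have hp1 : p.count 1 = 0 := hpc 1 (by norm_num) (by norm_num)
      omega
    · rcases eq_or_ne c 2 with rfl | hne2
      · have hpub : p.count 2 ≤ p.length := List.count_le_length
        have huc : u.count 2 = 0 := by
          rw [List.count_eq_zero]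
          intro hmem
          rcases hu 2 hmem with h' | h' <;> simp at h'
        omega
      · have hpc' := hpc c hne hne2
        have huc : u.count c = 0 := by
          rw [List.count_eq_zero]
          intro hmem
          rcases hu c hmem with rfl | rfl
          · exact hne rfl
          · exact hne1 rfl
        omega
  subst hc0
  have hjoin := join_rep ξ hξy hc u hu
  rw [hjoin, h0, hc] at h
  -- rearrange
  have h' : ((a ++ [0]) ++ ξ 2) ++ (List.replicate k 0 ++ b) = p ++ u := by
    simpa [List.append_assoc] using h
  have hLlen : ((a ++ [0]) ++ ξ 2).length = p.length + (k - b.length) := by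
    simp only [List.length_append, List.length_singleton, hpl]
    omega
  have hdrop := congrArg (List.drop (((a ++ [0]) ++ ξ 2).length)) h'
  rw [List.drop_left, hLlen, List.drop_append] at hdrop
  rw [List.drop_eq_nil_of_le (by omega), List.nil_append, Nat.add_sub_cancel_left] at hdrop
  have : u = u.take (k - b.length) ++ (List.replicate k 0 ++ b) := by
    conv_lhs => rw [← List.take_append_drop (k - b.length) u]
    rw [← hdrop]
  exact hnf (u.take (k - b.length)) b (by simpa [List.append_assoc] using this)

theorem stmt_18 (k : ℕ) (hk : 2 ≤ k) (u : List ℕ)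
    (hu : ∀ c ∈ u, c = 0 ∨ c = 1)
    (h0 : u.count 0 = k) (h1 : u.count 1 = k)
    (hnf : ∀ a b : List ℕ, u ≠ a ++ List.replicate k 0 ++ b)
    (ξ : ℕ → List ℕ) (hξx : ξ 0 ≠ []) (hξt : ξ 2 ≠ []) (hξy : ξ 1 = [])
    (a b : List ℕ) :
    a ++ ((([0, 2] ++ u)).map ξ).flatten ++ b ≠ [0, 2] ++ u ∧
    a ++ ((([0, 2] ++ u)).map ξ).flatten ++ b ≠ [2, 0] ++ u := by
  constructor <;>
    exact key k hk u hu h0 h1 hnf ξ hξx hξt hξy a b _ (by simp) (by simp)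
      (by intro c h1 h2; simp [List.count_cons, h1, h2, Ne.symm h1, Ne.symm h2])
end
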